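/- For every unweighted congestion game with quadratic latency functions ℓ_e(x) = α_e x² (α_e ≥ 0), the solution S achieved after any one-round walk starting from the empty strategy profile satisfies SUM(S) ≤ 37.5888·SUM(O) for every strategy profile O. In particular, Apx¹_∅ of any such game is at most 37.5888. -/

import Mathlib

open Finset

namespace CG

variable {n : ℕ} {E : Type*} [Fintype E] [DecidableEq E]

/-- The congestion (total weight) of resource `e` in profile `S`. -/
noncomputable def load (w : Fin n → ℝ) (S : Fin n → Finset E) (e : E) : ℝ :=
  ∑ i ∈ univ.filter fun i => e ∈ S i, w i

/-- The cost of player `i` in profile `S`. -/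
noncomputable def cost (w : Fin n → ℝ) (ℓ : E → ℝ → ℝ) (S : Fin n → Finset E) (i : Fin n) : ℝ :=
  ∑ e ∈ S i, ℓ e (load w S e)

/-- The social cost `SUM(S)`, the sum of the players' costs. -/
noncomputable def social (w : Fin n → ℝ) (ℓ : E → ℝ → ℝ) (S : Fin n → Finset E) : ℝ :=
  ∑ i, cost w ℓ S i

/-- The congestion of resource `e` due to the players preceding `i` (used for one-round walks). -/
noncomputable def preLoad (w : Fin n → ℝ) (S : Fin n → Finset E) (i : Fin n) (e : E) : ℝ :=
  ∑ j ∈ univ.filter fun j => j < i ∧ e ∈ S j, w j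

end CG

open CG

/-- AM–GM–type inequality: `3u²v ≤ 2u³ + v³` for nonnegative reals. -/
lemma CGaux.amgm2 (u v : ℝ) (hu : 0 ≤ u) (hv : 0 ≤ v) : 3*u^2*v ≤ 2*u^3 + v^3 := by
  nlinarith [mul_nonneg (sq_nonneg (u - v)) (by linarith : (0:ℝ) ≤ 2*u + v)]

/-- The key per-resource numeric inequality. -/
lemma CGaux.key (a b : ℕ) :
    (a:ℝ)^3 + 5.2944*(b:ℝ)*((a:ℝ)+1)^2
      ≤ 37.5888*(b:ℝ)^3 + 5.2944*((a:ℝ)*((a:ℝ)+1)*(2*(a:ℝ)+1)/6) := by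
  rcases Nat.lt_or_ge a 5 with ha | ha
  · interval_cases a <;> rcases b with _ | _ | m <;>
      first
        | (norm_num; done)
        | (push_cast
           nlinarith [Nat.cast_nonneg (α := ℝ) m, sq_nonneg ((m:ℝ)),
             pow_nonneg (Nat.cast_nonneg (α := ℝ) m) 3])
  · have hx : (5:ℝ) ≤ (a:ℝ) := by exact_mod_cast ha
    have hy : (0:ℝ) ≤ (b:ℝ) := Nat.cast_nonneg b
    have h1 := CGaux.amgm2 ((a:ℝ)+1) (4.61507*(b:ℝ)) (by linarith) (by linarith)
    nlinarith [h1, sq_nonneg ((a:ℝ) - 5), hx,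
      pow_nonneg (by linarith : (0:ℝ) ≤ (a:ℝ)) 3, pow_nonneg hy 3]

lemma CGaux.sumsq (m : ℕ) :
    ∑ k ∈ Finset.range m, ((k:ℝ)+1)^2 = (m:ℝ)*((m:ℝ)+1)*(2*(m:ℝ)+1)/6 := by
  induction m with
  | zero => simp
  | succ p ih => rw [Finset.sum_range_succ, ih]; push_cast; ring

lemma CGaux.enum_sum {γ : Type*} [LinearOrder γ] [DecidableEq γ] (T : Finset γ) (f : ℕ → ℝ) :
    ∑ i ∈ T, f ((T.filter (fun j => j < i)).card) = ∑ k ∈ Finset.range T.card, f k := by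
  induction T using Finset.induction_on_max with
  | empty => simp
  | insert a s hlt ih =>
    have has : a ∉ s := fun h => lt_irrefl a (hlt a h)
    have h1 : (insert a s).filter (fun j => j < a) = s := by
      ext x
      simp only [Finset.mem_filter, Finset.mem_insert]
      constructor
      · rintro ⟨h | h, hx⟩
        · exact absurd (h ▸ hx) (lt_irrefl a)
        · exact h
      · intro hx; exact ⟨Or.inr hx, hlt x hx⟩
    have h2 : ∀ i ∈ s, (insert a s).filter (fun j => j < i) = s.filter (fun j => j < i) := by
      intro i hi
      ext x
      simp only [Finset.mem_filter, Finset.mem_insert]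
      constructor
      · rintro ⟨h | h, hx⟩
        · exact absurd (h ▸ hx) (not_lt.2 (hlt i hi).le)
        · exact ⟨h, hx⟩
      · rintro ⟨h, hx⟩; exact ⟨Or.inr h, hx⟩
    rw [Finset.sum_insert has, Finset.card_insert_of_notMem has, Finset.sum_range_succ, h1,
      Finset.sum_congr rfl (fun i hi => by rw [h2 i hi]), ih]
    ring

lemma CGaux.swap_sum {n : ℕ} {E : Type*} [Fintype E] [DecidableEq E]
    (S : Fin n → Finset E) (g : Fin n → E → ℝ) :
    ∑ i, ∑ e ∈ S i, g i e = ∑ e, ∑ i ∈ univ.filter (fun i => e ∈ S i), g i e := by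
  have h : ∀ i, ∑ e ∈ S i, g i e = ∑ e : E, if e ∈ S i then g i e else 0 := by
    intro i
    rw [Finset.sum_ite_mem, Finset.univ_inter]
  simp_rw [h, Finset.sum_filter]
  exact Finset.sum_comm

theorem oneround_unweighted_quadratic
    (n : ℕ) (E : Type*) [Fintype E] [DecidableEq E]
    (w : Fin n → ℝ) (hw : ∀ i, w i = 1)
    (Strat : Fin n → Set (Finset E)) (hStrat : ∀ i, (Strat i).Nonempty)
    (α : E → ℝ) (hα : ∀ e, 0 ≤ α e)
    (ℓ : E → ℝ → ℝ) (hℓ : ∀ e x, ℓ e x = α e * x ^ 2)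
    (S : Fin n → Finset E)
    (hWalk : ∀ i, S i ∈ Strat i ∧ ∀ t ∈ Strat i,
      ∑ e ∈ S i, ℓ e (preLoad w S i e + w i) ≤ ∑ e ∈ t, ℓ e (preLoad w S i e + w i))
    (O : Fin n → Finset E) (hO : ∀ i, O i ∈ Strat i) :
    social w ℓ S ≤ 37.5888 * social w ℓ O := by
  classical
  -- integer loads
  set Tf : E → Finset (Fin n) := fun e => univ.filter fun i => e ∈ S i with hTfdef
  set Uf : E → Finset (Fin n) := fun e => univ.filter fun i => e ∈ O i with hUfdef
  set Lc : E → ℕ := fun e => (Tf e).card with hLcdef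
  set oc : E → ℕ := fun e => (Uf e).card with hocdef
  have hcard : ∀ (P : Fin n → Finset E) (e : E),
      load w P e = ((univ.filter fun i => e ∈ P i).card : ℝ) := by
    intro P e
    rw [CG.load, Finset.sum_congr rfl (fun i _ => hw i), Finset.sum_const, nsmul_eq_mul, mul_one]
  have hLS : ∀ e, load w S e = (Lc e : ℝ) := fun e => hcard S e
  have hLO : ∀ e, load w O e = (oc e : ℝ) := fun e => hcard O e
  -- preLoad as a cardinality
  have hpre : ∀ (i : Fin n) (e : E),
      preLoad w S i e = (((Tf e).filter fun j => j < i).card : ℝ) := by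
    intro i e
    have hset : ((Tf e).filter fun j => j < i) = univ.filter fun j => j < i ∧ e ∈ S j := by
      ext x
      simp [hTfdef, and_comm]
    rw [CG.preLoad, ← hset, Finset.sum_congr rfl (fun j _ => hw j), Finset.sum_const,
      nsmul_eq_mul, mul_one]
  have hpre_nonneg : ∀ (i : Fin n) (e : E), 0 ≤ preLoad w S i e := by
    intro i e; rw [hpre]; positivity
  have hpre_le : ∀ (i : Fin n) (e : E), preLoad w S i e ≤ (Lc e : ℝ) := by
    intro i e
    rw [hpre]
    exact_mod_cast Finset.card_le_card (Finset.filter_subset _ _)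
  -- social costs in terms of integer loads
  have hsocS : social w ℓ S = ∑ e, α e * (Lc e : ℝ)^3 := by
    simp only [CG.social, CG.cost]
    rw [Finset.sum_congr rfl fun i _ => Finset.sum_congr rfl fun e _ => by rw [hℓ, hLS],
      CGaux.swap_sum S (fun i e => α e * (Lc e : ℝ)^2)]
    refine Finset.sum_congr rfl fun e _ => ?_
    rw [Finset.sum_const, nsmul_eq_mul]
    ring
  have hsocO : social w ℓ O = ∑ e, α e * (oc e : ℝ)^3 := by
    simp only [CG.social, CG.cost]
    rw [Finset.sum_congr rfl fun i _ => Finset.sum_congr rfl fun e _ => by rw [hℓ, hLO],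
      CGaux.swap_sum O (fun i e => α e * (oc e : ℝ)^2)]
    refine Finset.sum_congr rfl fun e _ => ?_
    rw [Finset.sum_const, nsmul_eq_mul]
    ring
  -- the total greedy cost, per resource
  have hAA : ∑ i, ∑ e ∈ S i, α e * (preLoad w S i e + 1)^2
      = ∑ e, α e * ((Lc e : ℝ)*((Lc e : ℝ)+1)*(2*(Lc e : ℝ)+1)/6) := by
    rw [CGaux.swap_sum S (fun i e => α e * (preLoad w S i e + 1)^2)]
    refine Finset.sum_congr rfl fun e _ => ?_
    have : ∑ i ∈ Tf e, α e * (preLoad w S i e + 1)^2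
        = α e * ∑ i ∈ Tf e, ((((Tf e).filter fun j => j < i).card : ℝ) + 1)^2 := by
      rw [Finset.mul_sum]
      exact Finset.sum_congr rfl fun i _ => by rw [hpre]
    rw [this, CGaux.enum_sum (Tf e) (fun k => ((k:ℝ)+1)^2), CGaux.sumsq]
  -- greedy step
  have hgreedy : ∀ i,
      ∑ e ∈ S i, α e * (preLoad w S i e + 1)^2 ≤ ∑ e ∈ O i, α e * (preLoad w S i e + 1)^2 := by
    intro i
    have h := (hWalk i).2 (O i) (hO i)
    simpa only [hℓ, hw] using h
  have hmono : ∀ i, ∑ e ∈ O i, α e * (preLoad w S i e + 1)^2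
      ≤ ∑ e ∈ O i, α e * ((Lc e : ℝ) + 1)^2 := by
    intro i
    refine Finset.sum_le_sum fun e _ => ?_
    have h1 := hpre_nonneg i e
    have h2 := hpre_le i e
    have h3 : 0 ≤ α e * ((((Lc e : ℝ)) - preLoad w S i e) * (((Lc e : ℝ)) + preLoad w S i e + 2)) :=
      mul_nonneg (hα e) (mul_nonneg (by linarith) (by linarith))
    nlinarith [h3]
  have hUB : ∑ i, ∑ e ∈ O i, α e * ((Lc e : ℝ) + 1)^2
      = ∑ e, (oc e : ℝ) * (α e * ((Lc e : ℝ) + 1)^2) := by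
    rw [CGaux.swap_sum O (fun i e => α e * ((Lc e : ℝ) + 1)^2)]
    refine Finset.sum_congr rfl fun e _ => ?_
    rw [Finset.sum_const, nsmul_eq_mul]
  have hchain : ∑ e, α e * ((Lc e : ℝ)*((Lc e : ℝ)+1)*(2*(Lc e : ℝ)+1)/6)
      ≤ ∑ e, (oc e : ℝ) * (α e * ((Lc e : ℝ) + 1)^2) := by
    calc ∑ e, α e * ((Lc e : ℝ)*((Lc e : ℝ)+1)*(2*(Lc e : ℝ)+1)/6)
        = ∑ i, ∑ e ∈ S i, α e * (preLoad w S i e + 1)^2 := hAA.symm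
      _ ≤ ∑ i, ∑ e ∈ O i, α e * (preLoad w S i e + 1)^2 :=
          Finset.sum_le_sum fun i _ => hgreedy i
      _ ≤ ∑ i, ∑ e ∈ O i, α e * ((Lc e : ℝ) + 1)^2 :=
          Finset.sum_le_sum fun i _ => hmono i
      _ = ∑ e, (oc e : ℝ) * (α e * ((Lc e : ℝ) + 1)^2) := hUB
  -- key inequality, summed with weights α e
  have hk : ∀ e ∈ (univ : Finset E),
      α e * (Lc e : ℝ)^3 + 5.2944 * ((oc e : ℝ) * (α e * ((Lc e : ℝ) + 1)^2))
        ≤ 37.5888 * (α e * (oc e : ℝ)^3)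
          + 5.2944 * (α e * ((Lc e : ℝ)*((Lc e : ℝ)+1)*(2*(Lc e : ℝ)+1)/6)) := by
    intro e _
    have h := mul_le_mul_of_nonneg_left (CGaux.key (Lc e) (oc e)) (hα e)
    nlinarith [h]
  have hsum := Finset.sum_le_sum hk
  rw [Finset.sum_add_distrib, Finset.sum_add_distrib, ← Finset.mul_sum, ← Finset.mul_sum,
    ← Finset.mul_sum] at hsum
  rw [hsocS, hsocO]
  linarith [hchain, hsum]
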